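/- For a positive semidefinite matrix W and vector h with hᴴWh > 0, the rank-one replacement W' = (W h hᴴ W)/(hᴴ W h) satisfies trace(W') ≤ trace(W), so the replacement does not increase transmit power. -/

import Mathlib

open scoped ComplexOrder
open Matrix in
lemma cs_aux {L : ℕ} (B : Matrix (Fin L) (Fin L) ℂ) (x y : Fin L → ℂ) :
    Complex.normSq (star x ⬝ᵥ (Bᴴ * B).mulVec y) ≤
      (star x ⬝ᵥ (Bᴴ * B).mulVec x).re * (star y ⬝ᵥ (Bᴴ * B).mulVec y).re := by
  have key : ∀ a b : Fin L → ℂ,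
      star a ⬝ᵥ (Bᴴ * B).mulVec b =
        inner (𝕜 := ℂ) ((EuclideanSpace.equiv (Fin L) ℂ).symm (B.mulVec a))
          ((EuclideanSpace.equiv (Fin L) ℂ).symm (B.mulVec b)) := by
    intro a b
    rw [EuclideanSpace.inner_eq_star_dotProduct, ← mulVec_mulVec, dotProduct_mulVec,
      ← star_mulVec]
    exact dotProduct_comm _ _
  set u := (EuclideanSpace.equiv (Fin L) ℂ).symm (B.mulVec x)
  set v := (EuclideanSpace.equiv (Fin L) ℂ).symm (B.mulVec y)
  rw [key x y, key x x, key y y, inner_self_eq_norm_sq_to_K (𝕜 := ℂ),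
    inner_self_eq_norm_sq_to_K (𝕜 := ℂ)]
  push_cast
  calc Complex.normSq (inner (𝕜 := ℂ) u v) = ‖inner (𝕜 := ℂ) u v‖ ^ 2 := by
        rw [← Complex.sq_norm]
    _ ≤ (‖u‖ * ‖v‖) ^ 2 := by
        have := norm_inner_le_norm (𝕜 := ℂ) u v
        exact pow_le_pow_left₀ (norm_nonneg _) this 2
    _ = ‖u‖ ^ 2 * ‖v‖ ^ 2 := by ring
    _ = (((‖u‖:ℂ) ^ 2).re) * (((‖v‖:ℂ) ^ 2).re) := by rw [← Complex.ofReal_pow, ← Complex.ofReal_pow, Complex.ofReal_re, Complex.ofReal_re]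


open Matrix in
/-- The rank-one replacement does not increase the trace (transmit power):
`trace(W') ≤ trace(W)`. -/
theorem stmt_3 {L : ℕ} (W : Matrix (Fin L) (Fin L) ℂ) (hW : W.PosSemidef)
    (h : Fin L → ℂ) (hpos : 0 < (star h ⬝ᵥ W.mulVec h).re)
    (W' : Matrix (Fin L) (Fin L) ℂ)
    (hW' : W' = (star h ⬝ᵥ W.mulVec h)⁻¹ •
      Matrix.vecMulVec (W.mulVec h) (star (W.mulVec h))) :
    W'.trace.re ≤ W.trace.re := by
  obtain ⟨B, hB⟩ : ∃ B : Matrix (Fin L) (Fin L) ℂ, W = Bᴴ * B := by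
    open scoped MatrixOrder in exact CStarAlgebra.nonneg_iff_eq_star_mul_self.mp hW.nonneg
  set d := star h ⬝ᵥ W.mulVec h with hd
  have hdnn : 0 ≤ d := hW.dotProduct_mulVec_nonneg h
  have him : d.im = 0 := (Complex.nonneg_iff.mp hdnn).2.symm
  have hdre : d = (d.re : ℂ) := Complex.ext rfl (by simp [him])
  set g := W.mulVec h with hg
  -- trace of W'
  have htr : W'.trace = d⁻¹ * ∑ i, Complex.normSq (g i) := by
    rw [hW', Matrix.trace_smul, smul_eq_mul]
    congr 1
    push_cast
    simp [Matrix.trace, Matrix.diag, Matrix.vecMulVec_apply, Complex.mul_conj]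
  -- key Cauchy-Schwarz bound
  have key : ∑ i, Complex.normSq (g i) ≤ W.trace.re * d.re := by
    have hW_trace : W.trace.re = ∑ i, (W i i).re := by
      simp [Matrix.trace, Matrix.diag]
    rw [hW_trace, Finset.sum_mul]
    refine Finset.sum_le_sum fun i _ => ?_
    have := cs_aux B (Pi.single i 1) h
    rw [← hB] at this
    have hs : star (Pi.single i (1:ℂ) : Fin L → ℂ) = Pi.single i 1 := by
      ext j; by_cases hj : j = i <;> simp [Pi.single_apply, hj]
    have e1 : star (Pi.single i 1 : Fin L → ℂ) ⬝ᵥ W.mulVec h = g i := by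
      rw [hs, single_dotProduct, one_mul]
    have e2 : (star (Pi.single i 1 : Fin L → ℂ) ⬝ᵥ W.mulVec (Pi.single i 1)) = W i i := by
      rw [hs, single_dotProduct, one_mul, Matrix.mulVec_single]; simp
    rw [e1, e2] at this
    exact this
  rw [htr]
  have : (d⁻¹ * (∑ i, Complex.normSq (g i) : ℝ)).re
      = (d.re)⁻¹ * ∑ i, Complex.normSq (g i) := by
    rw [hdre]
    norm_cast
  rw [this]
  rw [inv_mul_le_iff₀ hpos, mul_comm]
  exact key
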